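/- arXiv:2103.10373 — 5 statements merged into one kernel-verified Lean document; each statement's English description precedes it below -/
import Mathlib

section
/- Let A_1, …, A_M ∈ ℂ^{N×N} be simultaneously unitarily triangularizable with common unitary Q, with (λ_ℓ)_i denoting the i-th diagonal entry of Q^H A_ℓ Q. Let S ∈ ℂ^{M×M}. Then the spectrum of the MN×MN matrix A = diag(A_1,…,A_M) + S ⊗ I_N equals the union over i = 1,…,N of the spectra of the M×M matrices B_i = diag((λ_1)_i, …, (λ_M)_i) + S. -/
open Matrix Polynomial Finset

namespace MultiplexAux

variable {M N : ℕ}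

def bd (f : Fin M → Matrix (Fin N) (Fin N) ℂ) : Matrix (Fin M × Fin N) (Fin M × Fin N) ℂ :=
  Matrix.of fun p q => if p.1 = q.1 then f p.1 p.2 q.2 else 0

def kS (S : Matrix (Fin M) (Fin M) ℂ) : Matrix (Fin M × Fin N) (Fin M × Fin N) ℂ :=
  Matrix.of fun p q => S p.1 q.1 * (if p.2 = q.2 then 1 else 0)

lemma bd_mul (f g : Fin M → Matrix (Fin N) (Fin N) ℂ) :
    bd f * bd g = bd fun ℓ => f ℓ * g ℓ := by
  ext ⟨ℓ, i⟩ ⟨m, j⟩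
  simp only [bd, Matrix.mul_apply, Matrix.of_apply, Fintype.sum_prod_type]
  by_cases h : ℓ = m
  · subst h
    simp [Matrix.mul_apply, Finset.sum_ite_eq', ite_mul, mul_ite]
  · simp [h, ite_mul, mul_ite, Finset.sum_ite_eq']

lemma bd_one : bd (fun _ : Fin M => (1 : Matrix (Fin N) (Fin N) ℂ)) = 1 := by
  ext ⟨ℓ, i⟩ ⟨m, j⟩
  simp [bd, Matrix.one_apply, Prod.ext_iff, ite_and]

lemma bd_conjTranspose (f : Fin M → Matrix (Fin N) (Fin N) ℂ) :
    (bd f)ᴴ = bd fun ℓ => (f ℓ)ᴴ := by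
  ext ⟨ℓ, i⟩ ⟨m, j⟩
  simp only [bd, conjTranspose_apply, Matrix.of_apply]
  by_cases h : ℓ = m <;> simp [h, eq_comm]

lemma bd_comm_kS (Q : Matrix (Fin N) (Fin N) ℂ) (S : Matrix (Fin M) (Fin M) ℂ) :
    bd (fun _ => Q) * kS S = kS S * bd (fun _ => Q) := by
  ext ⟨ℓ, i⟩ ⟨m, j⟩
  simp only [bd, kS, Matrix.mul_apply, Matrix.of_apply, Fintype.sum_prod_type]
  simp [ite_mul, mul_ite, Finset.sum_ite_eq', Finset.sum_ite_eq, mul_comm]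

lemma charpoly_conj {n : Type*} [Fintype n] [DecidableEq n] (U A : Matrix n n ℂ)
    (h1 : U * Uᴴ = 1) : (U * A * Uᴴ).charpoly = A.charpoly := by
  have hU : (U.map (C : ℂ →+* ℂ[X])) * (Uᴴ.map C) = 1 := by
    rw [← Matrix.map_mul, h1, Matrix.map_one _ (map_zero _) (map_one _)]
  have hc : Matrix.scalar n (X : ℂ[X]) * U.map C = U.map C * Matrix.scalar n X :=
    (Matrix.scalar_commute _ (fun r => Commute.all _ _) _).eq
  have key : charmatrix (U * A * Uᴴ) = (U.map C) * charmatrix A * (Uᴴ.map C) := by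
    simp only [charmatrix, RingHom.mapMatrix_apply, Matrix.mul_sub, Matrix.sub_mul]
    congr 1
    · rw [← hc, Matrix.mul_assoc, hU, Matrix.mul_one]
    · simp [Matrix.map_mul, Matrix.mul_assoc]
  unfold Matrix.charpoly
  rw [key, det_mul, det_mul]
  have hdet : (U.map (C : ℂ →+* ℂ[X])).det * (Uᴴ.map C).det = 1 := by
    rw [← det_mul, hU, det_one]
  calc (U.map (C : ℂ →+* ℂ[X])).det * (charmatrix A).det * (Uᴴ.map C).det
      = (U.map C).det * (Uᴴ.map C).det * (charmatrix A).det := by ring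
    _ = (charmatrix A).det := by rw [hdet, one_mul]

def blockEquiv (M N : ℕ) (i : Fin N) : {p : Fin M × Fin N // p.2 = i} ≃ Fin M :=
  ⟨fun p => p.1.1, fun ℓ => ⟨(ℓ, i), rfl⟩,
    fun p => by rcases p with ⟨⟨ℓ, j⟩, h⟩; simp only at h; subst h; rfl,
    fun ℓ => rfl⟩

@[simp] lemma blockEquiv_apply (M N : ℕ) (i : Fin N) (p : {p : Fin M × Fin N // p.2 = i}) :
    blockEquiv M N i p = p.1.1 := rfl

lemma charpoly_eq_of_equiv {n : Type*} [Fintype n] [DecidableEq n]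
    {m : Type*} [Fintype m] [DecidableEq m]
    (X : Matrix n n ℂ) (Y : Matrix m m ℂ) (e : n ≃ m)
    (h : ∀ a b, X a b = Y (e a) (e b)) : X.charpoly = Y.charpoly := by
  have hX : X = (Matrix.reindex e.symm e.symm) Y := by
    ext a b; simp [h]
  rw [hX, Matrix.charpoly_reindex]

end MultiplexAux



open MultiplexAux in
/-- Multiplex decomposition: the characteristic polynomial of
diag(A₁,…,A_M) + S ⊗ I_N factors into those of the M×M matrices
diag((λ₁)_i,…,(λ_M)_i) + S. -/
theorem multiplex_decomposition (M N : ℕ)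
    (Q : Matrix (Fin N) (Fin N) ℂ) (hQ : Q ∈ Matrix.unitaryGroup (Fin N) ℂ)
    (A : Fin M → Matrix (Fin N) (Fin N) ℂ)
    (hT : ∀ ℓ, ∀ i j : Fin N, j < i → (Qᴴ * A ℓ * Q) i j = 0)
    (S : Matrix (Fin M) (Fin M) ℂ) :
    (Matrix.of fun p q : Fin M × Fin N =>
        (if p.1 = q.1 then A p.1 p.2 q.2 else 0) +
          S p.1 q.1 * (if p.2 = q.2 then 1 else 0)).charpoly =
      ∏ i : Fin N,
        (Matrix.diagonal (fun ℓ : Fin M => (Qᴴ * A ℓ * Q) i i) + S).charpoly := by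
  rcases Nat.eq_zero_or_pos M with hM | hM
  · subst hM
    have h0 : ∀ (X : Matrix (Fin 0 × Fin N) (Fin 0 × Fin N) ℂ), X.charpoly = 1 := by
      intro X; unfold Matrix.charpoly; exact Matrix.det_isEmpty
    have h0' : ∀ (Y : Matrix (Fin 0) (Fin 0) ℂ), Y.charpoly = 1 := by
      intro Y; unfold Matrix.charpoly; exact Matrix.det_isEmpty
    rw [h0]
    simp [h0']
  · have hQ1 : Q * Qᴴ = 1 := by
      have := (Matrix.mem_unitaryGroup_iff).mp hQ
      rwa [Matrix.star_eq_conjTranspose] at this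
    set T : Fin M → Matrix (Fin N) (Fin N) ℂ := fun ℓ => Qᴴ * A ℓ * Q with hTdef
    have hW : bd (fun _ : Fin M => Q) * (bd (fun _ : Fin M => Q))ᴴ = 1 := by
      rw [bd_conjTranspose, bd_mul]
      simp only [hQ1]
      exact bd_one
    have hL : (Matrix.of fun p q : Fin M × Fin N =>
        (if p.1 = q.1 then A p.1 p.2 q.2 else 0) +
          S p.1 q.1 * (if p.2 = q.2 then 1 else 0)) =
        bd (fun _ : Fin M => Q) * (bd T + kS S) * (bd (fun _ : Fin M => Q))ᴴ := by
      rw [Matrix.mul_add, Matrix.add_mul, bd_conjTranspose, bd_comm_kS,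
        Matrix.mul_assoc (kS S), bd_mul, bd_mul, bd_mul]
      simp only [hQ1]
      have h1 : (fun ℓ => Q * T ℓ * Qᴴ) = A := by
        funext ℓ
        rw [hTdef]
        calc Q * (Qᴴ * A ℓ * Q) * Qᴴ = (Q * Qᴴ) * A ℓ * (Q * Qᴴ) := by
              simp only [Matrix.mul_assoc]
          _ = A ℓ := by rw [hQ1]; simp
      rw [h1, bd_one, mul_one]
      ext ⟨ℓ, i⟩ ⟨m, j⟩
      simp [bd, kS]
    rw [hL, charpoly_conj _ _ hW]
    have htri : (bd T + kS S).BlockTriangular Prod.snd := by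
      intro p q h
      have h2 : p.2 ≠ q.2 := (ne_of_lt h).symm
      simp [bd, kS, hT p.1 p.2 q.2 h, h2, hTdef]
    rw [htri.charpoly]
    refine Eq.trans (Finset.prod_congr (s₂ := Finset.univ) ?_ (fun a _ => rfl)) ?_
    · ext i
      simp only [Finset.mem_image, Finset.mem_univ, iff_true]
      exact ⟨(⟨0, hM⟩, i), by simp⟩
    refine Finset.prod_congr rfl fun i _ => ?_
    have hent : ∀ a b, ((bd T + kS S).toSquareBlock Prod.snd i) a b =
        ((Matrix.diagonal fun ℓ : Fin M => (Qᴴ * A ℓ * Q) i i) + S)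
          (blockEquiv M N i a) (blockEquiv M N i b) := by
      rintro ⟨⟨ℓ, i'⟩, hp⟩ ⟨⟨m, j'⟩, hq⟩
      have hp' : i' = i := hp
      have hq' : j' = i := hq
      simp only [Matrix.toSquareBlock_def, Matrix.add_apply, Matrix.of_apply, bd, kS,
        Matrix.diagonal_apply, blockEquiv_apply, hTdef, hp', hq']
      by_cases h : ℓ = m <;> simp [h]
    have goal' := charpoly_eq_of_equiv ((bd T + kS S).toSquareBlock Prod.snd i)
      ((Matrix.diagonal fun ℓ : Fin M => (Qᴴ * A ℓ * Q) i i) + S) (blockEquiv M N i) hent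
    convert goal' using 2
end

section
/- Let A_1, A_2 ∈ ℂ^{N×N} be simultaneously unitarily triangularizable with common unitary Q, with (λ_1)_i, (λ_2)_i the i-th diagonal entries of Q^H A_1 Q and Q^H A_2 Q respectively, and let κ_{12}, κ_{21} ∈ ℂ. Then μ ∈ ℂ is an eigenvalue of the 2N×2N block matrix A = [[A_1, κ_{12} I_N],[κ_{21} I_N, A_2]] if and only if there exists i ∈ {1,…,N} such that μ² − ((λ_1)_i + (λ_2)_i) μ + (λ_1)_i (λ_2)_i − κ_{12} κ_{21} = 0. -/
open Matrix Polynomial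

lemma charpoly_eval_smul {n : Type*} [DecidableEq n] [Fintype n] {R : Type*} [CommRing R]
    (M : Matrix n n R) (μ : R) :
    M.charpoly.eval μ = (μ • (1 : Matrix n n R) - M).det := by
  rw [Matrix.charpoly, _root_.eval_det, Matrix.matPolyEquiv_charmatrix]
  have : (Matrix.scalar n μ : Matrix n n R) = μ • 1 := by
    ext i j; simp [Matrix.scalar_apply, Matrix.one_apply, Matrix.diagonal]
  simp [this]

def dupEquiv {N : ℕ} (i : Fin N) :
    Fin 2 ≃ { a : Fin N ⊕ Fin N // Sum.elim (id : Fin N → Fin N) id a = i } where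
  toFun k := if k = 0 then ⟨Sum.inl i, rfl⟩ else ⟨Sum.inr i, rfl⟩
  invFun a := if a.1 = Sum.inl i then 0 else 1
  left_inv k := by fin_cases k <;> simp
  right_inv := by
    rintro ⟨(a|a), ha⟩ <;> simp only [Sum.elim_inl, Sum.elim_inr, id] at ha <;>
      subst ha <;> simp

/-- Duplex decomposition: μ is an eigenvalue of the duplex matrix iff it
solves one of the N quadratic equations built from the layer eigenvalues. -/
theorem duplex_eigenvalue_quadratic (N : ℕ)
    (Q : Matrix (Fin N) (Fin N) ℂ) (hQ : Q ∈ Matrix.unitaryGroup (Fin N) ℂ)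
    (A₁ A₂ : Matrix (Fin N) (Fin N) ℂ)
    (hT₁ : ∀ i j : Fin N, j < i → (Qᴴ * A₁ * Q) i j = 0)
    (hT₂ : ∀ i j : Fin N, j < i → (Qᴴ * A₂ * Q) i j = 0)
    (κ₁₂ κ₂₁ : ℂ) (μ : ℂ) :
    (Matrix.fromBlocks A₁ (κ₁₂ • (1 : Matrix (Fin N) (Fin N) ℂ))
        (κ₂₁ • (1 : Matrix (Fin N) (Fin N) ℂ)) A₂).charpoly.IsRoot μ ↔
      ∃ i : Fin N,
        μ ^ 2 - ((Qᴴ * A₁ * Q) i i + (Qᴴ * A₂ * Q) i i) * μ +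
            (Qᴴ * A₁ * Q) i i * (Qᴴ * A₂ * Q) i i - κ₁₂ * κ₂₁ = 0 := by
  set T₁ := Qᴴ * A₁ * Q with hT1def
  set T₂ := Qᴴ * A₂ * Q with hT2def
  set A : Matrix (Fin N ⊕ Fin N) (Fin N ⊕ Fin N) ℂ :=
    Matrix.fromBlocks A₁ (κ₁₂ • 1) (κ₂₁ • 1) A₂ with hA
  set M : Matrix (Fin N ⊕ Fin N) (Fin N ⊕ Fin N) ℂ :=
    Matrix.fromBlocks (μ • 1 - T₁) (-(κ₁₂ • 1))
      (-(κ₂₁ • 1)) (μ • 1 - T₂) with hM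
  set U : Matrix (Fin N ⊕ Fin N) (Fin N ⊕ Fin N) ℂ :=
    Matrix.fromBlocks Q 0 0 Q with hU
  have hQQ : Qᴴ * Q = 1 := by
    simpa [star_eq_conjTranspose] using (Matrix.mem_unitaryGroup_iff'.mp hQ)
  have hQQ' : Q * Qᴴ = 1 := by
    simpa [star_eq_conjTranspose] using (Matrix.mem_unitaryGroup_iff.mp hQ)
  -- conjugation
  have hconj : Uᴴ * (μ • 1 - A) * U = M := by
    have hs : (μ • (1 : Matrix (Fin N ⊕ Fin N) (Fin N ⊕ Fin N) ℂ) - A) =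
        Matrix.fromBlocks (μ • 1 - A₁) (-(κ₁₂ • 1))
          (-(κ₂₁ • 1)) (μ • 1 - A₂) := by
      ext (i|i) (j|j) <;>
        simp [hA, Matrix.one_apply, Matrix.fromBlocks,
          Matrix.sub_apply, Matrix.smul_apply]
    have h11 : Qᴴ * (μ • 1 - A₁) * Q = μ • 1 - T₁ := by
      rw [Matrix.mul_sub, Matrix.sub_mul, Matrix.mul_smul, Matrix.smul_mul,
        Matrix.mul_one, hQQ, hT1def]
    have h22 : Qᴴ * (μ • 1 - A₂) * Q = μ • 1 - T₂ := by
      rw [Matrix.mul_sub, Matrix.sub_mul, Matrix.mul_smul, Matrix.smul_mul,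
        Matrix.mul_one, hQQ, hT2def]
    have h12 : Qᴴ * (-(κ₁₂ • (1 : Matrix (Fin N) (Fin N) ℂ))) * Q = -(κ₁₂ • 1) := by
      rw [Matrix.mul_neg, Matrix.neg_mul, Matrix.mul_smul, Matrix.smul_mul,
        Matrix.mul_one, hQQ]
    have h21 : Qᴴ * (-(κ₂₁ • (1 : Matrix (Fin N) (Fin N) ℂ))) * Q = -(κ₂₁ • 1) := by
      rw [Matrix.mul_neg, Matrix.neg_mul, Matrix.mul_smul, Matrix.smul_mul,
        Matrix.mul_one, hQQ]
    rw [hs, hU, hM]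
    simp only [fromBlocks_conjTranspose, conjTranspose_zero, fromBlocks_multiply,
      Matrix.mul_zero, Matrix.zero_mul, add_zero, zero_add,
      Matrix.zero_mul, Matrix.mul_zero]
    simp only [Matrix.mul_assoc] at h11 h22 h12 h21 ⊢
    rw [h11, h22, h12, h21]
  have hdet : (μ • (1 : Matrix (Fin N ⊕ Fin N) (Fin N ⊕ Fin N) ℂ) - A).det = M.det := by
    calc (μ • (1 : Matrix (Fin N ⊕ Fin N) (Fin N ⊕ Fin N) ℂ) - A).det
        = ((Uᴴ * U).det) * (μ • 1 - A).det := by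
          rw [hU]; simp only [fromBlocks_conjTranspose, conjTranspose_zero,
            fromBlocks_multiply]
          simp [hQQ]
      _ = (Uᴴ * (μ • 1 - A) * U).det := by
          rw [Matrix.det_mul, Matrix.det_mul, Matrix.det_mul]; ring
      _ = M.det := by rw [hconj]
  -- block triangular structure
  have hBT : M.BlockTriangular (Sum.elim (id : Fin N → Fin N) id) := by
    rintro (i|i) (j|j) hij <;>
      simp only [Sum.elim_inl, Sum.elim_inr, id] at hij <;>
      simp [hM, Matrix.fromBlocks, Matrix.sub_apply,
        Matrix.smul_apply, Matrix.one_apply,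
        hT₁ _ _ hij, hT₂ _ _ hij] <;>
      exact fun h => absurd h hij.ne'
  have hMdet : M.det = ∏ i : Fin N, ((μ - T₁ i i) * (μ - T₂ i i) - κ₁₂ * κ₂₁) := by
    rw [hBT.det_fintype]
    refine Finset.prod_congr rfl fun i _ => ?_
    rw [← Matrix.det_submatrix_equiv_self (dupEquiv i)
      (M.toSquareBlock (Sum.elim id id) i), Matrix.det_fin_two]
    have h0 : ((dupEquiv i 0 : { a : Fin N ⊕ Fin N // Sum.elim id id a = i }) :
        Fin N ⊕ Fin N) = Sum.inl i := rfl
    have h1 : ((dupEquiv i 1 : { a : Fin N ⊕ Fin N // Sum.elim id id a = i }) :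
        Fin N ⊕ Fin N) = Sum.inr i := rfl
    simp only [Matrix.submatrix_apply, Matrix.toSquareBlock_def, Matrix.of_apply, h0, h1, hM,
      Matrix.fromBlocks_apply₁₁, Matrix.fromBlocks_apply₁₂,
      Matrix.fromBlocks_apply₂₁, Matrix.fromBlocks_apply₂₂,
      Matrix.sub_apply, Matrix.smul_apply, Matrix.one_apply_eq,
      Matrix.neg_apply, smul_eq_mul, mul_one]
    ring
  have key : (A.charpoly.IsRoot μ) ↔ M.det = 0 := by
    rw [Polynomial.IsRoot, charpoly_eval_smul, hdet]
  rw [key, hMdet, Finset.prod_eq_zero_iff]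
  constructor
  · rintro ⟨i, -, hi⟩
    exact ⟨i, by rw [← hi]; ring⟩
  · rintro ⟨i, hi⟩
    exact ⟨i, Finset.mem_univ _, by rw [← hi]; ring⟩
end

section
/- Let L_1, L_2 ∈ ℝ^{N×N} be simultaneously unitarily triangularizable with common unitary Q, with i-th diagonal entries (λ_1)_i and (λ_2)_i of Q^H L_1 Q and Q^H L_2 Q, and let κ_{12}, κ_{21} ∈ ℝ. Then the eigenvalues of the supra-Laplacian L_supra = [[L_1 + κ_{12} I_N, −κ_{12} I_N],[−κ_{21} I_N, L_2 + κ_{21} I_N]] are exactly the roots μ of the N quadratic equations (μ − (λ_1)_i − κ_{12})(μ − (λ_2)_i − κ_{21}) − κ_{12}κ_{21} = 0, i = 1,…,N. -/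
open Matrix Polynomial

lemma my_charpoly_conj {n : Type*} [Fintype n] [DecidableEq n] (U M : Matrix n n ℂ)
    (h1 : star U * U = 1) :
    (star U * M * U).charpoly = M.charpoly := by
  have hC : charmatrix (star U * M * U) = (star U).map C * charmatrix M * U.map C := by
    rw [charmatrix, charmatrix]
    simp only [RingHom.mapMatrix_apply, Matrix.map_mul, mul_sub, sub_mul, scalar_apply,
      ← smul_one_eq_diagonal]
    congr 1
    rw [Matrix.mul_smul, mul_one, Matrix.smul_mul, ← Matrix.map_mul, h1,
      Matrix.map_one _ (map_zero C) (map_one C)]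
  have hdet : (((star U).map C).det) * ((U.map C).det) = 1 := by
    rw [← det_mul, ← Matrix.map_mul, h1, Matrix.map_one _ (map_zero C) (map_one C), det_one]
  rw [Matrix.charpoly, Matrix.charpoly, hC, det_mul, det_mul]
  rw [mul_right_comm, mul_comm _ ((U.map C).det), mul_comm ((U.map C).det), hdet, one_mul]

/-- The equivalence between `Fin 2` and the fiber of `Sum.elim id id` over `i`. -/
def pairEquiv (N : ℕ) (i : Fin N) :
    Fin 2 ≃ {k : Fin N ⊕ Fin N // Sum.elim id id k = i} where
  toFun t := if t = 0 then ⟨Sum.inl i, rfl⟩ else ⟨Sum.inr i, rfl⟩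
  invFun k := Sum.elim (fun _ => 0) (fun _ => 1) k.1
  left_inv t := by fin_cases t <;> simp
  right_inv k := by
    obtain ⟨(x | x), hx⟩ := k <;> simp only [Sum.elim_inl, Sum.elim_inr, id_eq] at hx <;>
      subst hx <;> simp

@[simp] lemma pairEquiv_zero (N : ℕ) (i : Fin N) :
    pairEquiv N i 0 = ⟨Sum.inl i, rfl⟩ := rfl

@[simp] lemma pairEquiv_one (N : ℕ) (i : Fin N) :
    pairEquiv N i 1 = ⟨Sum.inr i, rfl⟩ := rfl

/-- The characteristic polynomial of the duplex supra-Laplacian factors as the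
product of the N quadratics (μ−(λ₁)ᵢ−κ₁₂)(μ−(λ₂)ᵢ−κ₂₁)−κ₁₂κ₂₁. -/
theorem supra_laplacian_charpoly_factorization (N : ℕ)
    (L₁ L₂ : Matrix (Fin N) (Fin N) ℝ)
    (Q : Matrix (Fin N) (Fin N) ℂ) (hQ : Q ∈ Matrix.unitaryGroup (Fin N) ℂ)
    (hT₁ : ∀ i j : Fin N, j < i → (Qᴴ * (L₁.map Complex.ofReal) * Q) i j = 0)
    (hT₂ : ∀ i j : Fin N, j < i → (Qᴴ * (L₂.map Complex.ofReal) * Q) i j = 0)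
    (κ₁₂ κ₂₁ : ℝ) :
    ((Matrix.fromBlocks (L₁ + κ₁₂ • 1) (-(κ₁₂ • 1)) (-(κ₂₁ • 1))
        (L₂ + κ₂₁ • 1)).map Complex.ofReal).charpoly =
      ∏ i : Fin N,
        ((X - C ((Qᴴ * (L₁.map Complex.ofReal) * Q) i i + (κ₁₂ : ℂ))) *
            (X - C ((Qᴴ * (L₂.map Complex.ofReal) * Q) i i + (κ₂₁ : ℂ))) -
          C ((κ₁₂ : ℂ) * (κ₂₁ : ℂ))) := by
  set A := Qᴴ * (L₁.map Complex.ofReal) * Q with hA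
  set B := Qᴴ * (L₂.map Complex.ofReal) * Q with hB
  have hQ1 : Qᴴ * Q = 1 := Matrix.UnitaryGroup.star_mul_self ⟨Q, hQ⟩
  set P : Matrix (Fin N ⊕ Fin N) (Fin N ⊕ Fin N) ℂ := fromBlocks Q 0 0 Q with hP
  have hP1 : star P * P = 1 := by
    rw [hP]
    show (fromBlocks Q 0 0 Q)ᴴ * _ = _
    rw [fromBlocks_conjTranspose, fromBlocks_multiply]
    simp [hQ1]
  set M' : Matrix (Fin N ⊕ Fin N) (Fin N ⊕ Fin N) ℂ :=
    fromBlocks (A + (κ₁₂ : ℂ) • 1) (-((κ₁₂ : ℂ) • 1)) (-((κ₂₁ : ℂ) • 1)) (B + (κ₂₁ : ℂ) • 1)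
    with hM'
  have e12 : ∀ (L : Matrix (Fin N) (Fin N) ℝ) (κ : ℝ),
      (L + κ • 1).map Complex.ofReal = L.map Complex.ofReal + (κ : ℂ) • 1 := by
    intro L κ
    ext i j
    by_cases h : i = j <;> simp [h, Matrix.one_apply]
  have e34 : ∀ (κ : ℝ), (-(κ • (1 : Matrix (Fin N) (Fin N) ℝ))).map Complex.ofReal
      = -((κ : ℂ) • 1) := by
    intro κ
    ext i j
    by_cases h : i = j <;> simp [h, Matrix.one_apply]
  have hconj : star P * (((Matrix.fromBlocks (L₁ + κ₁₂ • 1) (-(κ₁₂ • 1)) (-(κ₂₁ • 1))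
        (L₂ + κ₂₁ • 1)).map Complex.ofReal)) * P = M' := by
    rw [fromBlocks_map, hP]
    show (fromBlocks Q 0 0 Q)ᴴ * _ * _ = _
    rw [fromBlocks_conjTranspose, fromBlocks_multiply, fromBlocks_multiply, hM',
      e12, e12, e34, e34]
    simp only [conjTranspose_zero, Matrix.zero_mul, Matrix.mul_zero, add_zero, zero_add,
      Matrix.mul_neg, Matrix.neg_mul, mul_add, add_mul, Matrix.mul_smul, mul_one,
      Matrix.smul_mul, hQ1, ← hA, ← hB, smul_zero, neg_zero, add_zero, zero_add]
  rw [← my_charpoly_conj P _ hP1, hconj]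
  have hBT : M'.BlockTriangular (Sum.elim id id : Fin N ⊕ Fin N → Fin N) := by
    rintro (i | i) (j | j) hij <;>
      simp only [Sum.elim_inl, Sum.elim_inr, id_eq] at hij
    · simp [hM', hT₁ i j hij, Matrix.one_apply_ne (ne_of_gt hij)]
    · simp [hM', Matrix.one_apply_ne (ne_of_gt hij)]
    · simp [hM', Matrix.one_apply_ne (ne_of_gt hij)]
    · simp [hM', hT₂ i j hij, Matrix.one_apply_ne (ne_of_gt hij)]
  rw [hBT.charpoly]
  have himg : ∀ (inst : DecidableEq (Fin N)),
      @Finset.image _ _ inst (Sum.elim id id : Fin N ⊕ Fin N → Fin N) Finset.univ = Finset.univ := by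
    intro inst
    apply Finset.eq_univ_of_forall
    intro i
    exact Finset.mem_image.2 ⟨Sum.inl i, Finset.mem_univ _, rfl⟩
  rw [himg]
  apply Finset.prod_congr rfl
  intro i _
  have hre := Matrix.charpoly_reindex (R := ℂ) (pairEquiv N i).symm
    (M'.toSquareBlock (Sum.elim id id) i)
  have key : (reindex (pairEquiv N i).symm (pairEquiv N i).symm
      (M'.toSquareBlock (Sum.elim id id) i)).charpoly
      = (X - C (A i i + (κ₁₂ : ℂ))) * (X - C (B i i + (κ₂₁ : ℂ)))
        - C ((κ₁₂ : ℂ) * (κ₂₁ : ℂ)) := ?_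
  · convert hre.symm.trans key using 2
  set T := reindex (pairEquiv N i).symm (pairEquiv N i).symm (M'.toSquareBlock (Sum.elim id id) i) with hT
  have h00 : T 0 0 = A i i + (κ₁₂ : ℂ) := by
    simp [hT, Matrix.toSquareBlock_def, hM', Matrix.one_apply]
  have h01 : T 0 1 = -(κ₁₂ : ℂ) := by
    simp [hT, Matrix.toSquareBlock_def, hM', Matrix.one_apply]
  have h10 : T 1 0 = -(κ₂₁ : ℂ) := by
    simp [hT, Matrix.toSquareBlock_def, hM', Matrix.one_apply]
  have h11 : T 1 1 = B i i + (κ₂₁ : ℂ) := by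
    simp [hT, Matrix.toSquareBlock_def, hM', Matrix.one_apply]
  rw [Matrix.charpoly, Matrix.det_fin_two, charmatrix_apply_eq, charmatrix_apply_eq,
    charmatrix_apply_ne _ _ _ (by decide), charmatrix_apply_ne _ _ _ (by decide),
    h00, h01, h10, h11]
  simp only [map_neg, _root_.map_mul]
  ring
end

section
/- Let L_1, L_2 ∈ ℝ^{N×N} be simultaneously unitarily triangularizable with real common diagonal entries (λ_1)_i, (λ_2)_i, and let κ = κ_{12} = κ_{21} ∈ ℝ. Then the eigenvalues of the supra-Laplacian [[L_1 + κI, −κI],[−κI, L_2 + κI]] corresponding to index i are real and given by ((λ_1)_i + (λ_2)_i + 2κ)/2 ± (1/2)√(((λ_1)_i − (λ_2)_i)² + 4κ²). -/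
open Matrix

lemma fromBlocks_sub' {l m α : Type*} [AddGroup α]
    (A A' : Matrix l l α) (B B' : Matrix l m α) (C C' : Matrix m l α) (D D' : Matrix m m α) :
    Matrix.fromBlocks A B C D - Matrix.fromBlocks A' B' C' D'
      = Matrix.fromBlocks (A - A') (B - B') (C - C') (D - D') := by
  simp [sub_eq_add_neg, Matrix.fromBlocks_neg, Matrix.fromBlocks_add]

noncomputable def blkEquiv (N : ℕ) (i : Fin N) :
    Fin 2 ≃ {x : Fin N ⊕ Fin N // Sum.elim id id x = i} where
  toFun k := if k = 0 then ⟨Sum.inl i, rfl⟩ else ⟨Sum.inr i, rfl⟩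
  invFun x := match x with
    | ⟨Sum.inl _, _⟩ => 0
    | ⟨Sum.inr _, _⟩ => 1
  left_inv k := by fin_cases k <;> simp
  right_inv x := by
    obtain ⟨x | x, hx⟩ := x
    · simp only [Sum.elim_inl, id] at hx; subst hx; simp
    · simp only [Sum.elim_inr, id] at hx; subst hx; simp

lemma det_fromBlocks_triangular {N : ℕ} (S₁ S₂ : Matrix (Fin N) (Fin N) ℂ) (c : ℂ)
    (h₁ : ∀ i j : Fin N, j < i → S₁ i j = 0) (h₂ : ∀ i j : Fin N, j < i → S₂ i j = 0) :
    (Matrix.fromBlocks S₁ (c • 1) (c • 1) S₂).det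
      = ∏ i : Fin N, (S₁ i i * S₂ i i - c * c) := by
  have hbt : BlockTriangular (fromBlocks S₁ (c • 1) (c • 1) S₂) (Sum.elim id id) := by
    rintro (x | x) (y | y) h <;>
      simp only [Sum.elim_inl, Sum.elim_inr, id] at h
    · exact h₁ x y h
    · show (c • (1 : Matrix (Fin N) (Fin N) ℂ)) x y = 0
      simp [Matrix.one_apply, (ne_of_lt h).symm]
    · show (c • (1 : Matrix (Fin N) (Fin N) ℂ)) x y = 0
      simp [Matrix.one_apply, (ne_of_lt h).symm]
    · exact h₂ x y h
  rw [hbt.det_fintype]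
  refine Finset.prod_congr rfl fun i _ => ?_
  rw [← Matrix.det_submatrix_equiv_self (blkEquiv N i), Matrix.det_fin_two]
  simp [Matrix.toSquareBlock_def, blkEquiv, Matrix.one_apply]

lemma eval_charpoly' {n : Type*} [DecidableEq n] [Fintype n] (M : Matrix n n ℂ) (μ : ℂ) :
    M.charpoly.eval μ = (μ • (1 : Matrix n n ℂ) - M).det := by
  rw [Matrix.charpoly, ← Polynomial.coe_evalRingHom, RingHom.map_det]
  congr 1
  ext i j
  by_cases h : i = j
  · subst h
    simp [Matrix.charmatrix_apply_eq, Matrix.one_apply]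
  · simp [Matrix.charmatrix_apply_ne _ _ _ h, Matrix.one_apply, h]

/-- For a symmetric duplex (κ₁₂ = κ₂₁ = κ) with real layer Schur diagonals, the
eigenvalues corresponding to index i are real and given by the explicit
formula with the square root. -/
theorem supra_laplacian_symmetric_real_eigenvalues (N : ℕ)
    (L₁ L₂ : Matrix (Fin N) (Fin N) ℝ)
    (Q : Matrix (Fin N) (Fin N) ℂ) (hQ : Q ∈ Matrix.unitaryGroup (Fin N) ℂ)
    (hT₁ : ∀ i j : Fin N, j < i → (Qᴴ * (L₁.map Complex.ofReal) * Q) i j = 0)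
    (hT₂ : ∀ i j : Fin N, j < i → (Qᴴ * (L₂.map Complex.ofReal) * Q) i j = 0)
    (lam₁ lam₂ : Fin N → ℝ)
    (hlam₁ : ∀ i, (Qᴴ * (L₁.map Complex.ofReal) * Q) i i = (lam₁ i : ℂ))
    (hlam₂ : ∀ i, (Qᴴ * (L₂.map Complex.ofReal) * Q) i i = (lam₂ i : ℂ))
    (κ : ℝ) :
    ∀ i : Fin N,
      (((Matrix.fromBlocks (L₁ + κ • 1) (-(κ • 1)) (-(κ • 1))
          (L₂ + κ • 1)).map Complex.ofReal).charpoly.IsRoot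
        (((lam₁ i + lam₂ i + 2 * κ) / 2 +
          Real.sqrt ((lam₁ i - lam₂ i) ^ 2 + 4 * κ ^ 2) / 2 : ℝ) : ℂ)) ∧
      (((Matrix.fromBlocks (L₁ + κ • 1) (-(κ • 1)) (-(κ • 1))
          (L₂ + κ • 1)).map Complex.ofReal).charpoly.IsRoot
        (((lam₁ i + lam₂ i + 2 * κ) / 2 -
          Real.sqrt ((lam₁ i - lam₂ i) ^ 2 + 4 * κ ^ 2) / 2 : ℝ) : ℂ)) := by
  intro i
  have hQ1 : Qᴴ * Q = 1 := (Matrix.mem_unitaryGroup_iff').mp hQ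
  have hQ2 : Q * Qᴴ = 1 := (Matrix.mem_unitaryGroup_iff).mp hQ
  set L₁' : Matrix (Fin N) (Fin N) ℂ := L₁.map Complex.ofReal with hL₁'
  set L₂' : Matrix (Fin N) (Fin N) ℂ := L₂.map Complex.ofReal with hL₂'
  set T₁ : Matrix (Fin N) (Fin N) ℂ := Qᴴ * L₁' * Q with hT₁def
  set T₂ : Matrix (Fin N) (Fin N) ℂ := Qᴴ * L₂' * Q with hT₂def
  -- map of the real blocks
  have hmap₁ : (L₁ + κ • 1).map Complex.ofReal = L₁' + (κ : ℂ) • 1 := by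
    ext a b
    by_cases h : a = b <;>
      simp [hL₁', hL₂', Matrix.map_apply, Matrix.one_apply, Matrix.add_apply, Matrix.smul_apply, h]
  have hmap₂ : (L₂ + κ • 1).map Complex.ofReal = L₂' + (κ : ℂ) • 1 := by
    ext a b
    by_cases h : a = b <;>
      simp [hL₁', hL₂', Matrix.map_apply, Matrix.one_apply, Matrix.add_apply, Matrix.smul_apply, h]
  have hmapκ : (-(κ • 1) : Matrix (Fin N) (Fin N) ℝ).map Complex.ofReal
      = -((κ : ℂ) • 1) := by
    ext a b
    by_cases h : a = b <;>
      simp [Matrix.map_apply, Matrix.one_apply, Matrix.neg_apply, Matrix.smul_apply, h]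
  have key : ∀ μ : ℝ, ((μ - lam₁ i - κ) * (μ - lam₂ i - κ) - κ * κ = 0) →
      (((Matrix.fromBlocks (L₁ + κ • 1) (-(κ • 1)) (-(κ • 1))
          (L₂ + κ • 1)).map Complex.ofReal).charpoly.IsRoot (μ : ℂ)) := by
    intro μ hμ
    rw [Polynomial.IsRoot, eval_charpoly']
    set M' : Matrix (Fin N ⊕ Fin N) (Fin N ⊕ Fin N) ℂ :=
      (Matrix.fromBlocks (L₁ + κ • 1) (-(κ • 1)) (-(κ • 1)) (L₂ + κ • 1)).map
        Complex.ofReal with hM'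
    set U : Matrix (Fin N ⊕ Fin N) (Fin N ⊕ Fin N) ℂ := Matrix.fromBlocks Q 0 0 Q with hU
    have hUH : Uᴴ = Matrix.fromBlocks Qᴴ 0 0 Qᴴ := by
      simp [hU, Matrix.fromBlocks_conjTranspose]
    have hUU : Uᴴ * U = 1 := by
      rw [hUH, hU, Matrix.fromBlocks_multiply]
      simp [hQ1, Matrix.fromBlocks_one]
    have hdetU : (Uᴴ).det * U.det = 1 := by
      rw [← Matrix.det_mul, hUU, Matrix.det_one]
    set X : Matrix (Fin N ⊕ Fin N) (Fin N ⊕ Fin N) ℂ := (μ : ℂ) • 1 - M' with hX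
    have hconj : X.det = (Uᴴ * X * U).det := by
      rw [Matrix.det_mul, Matrix.det_mul]
      ring_nf
      rw [mul_comm, ← mul_assoc, mul_comm (U.det), hdetU, one_mul]
    rw [hconj]
    have hblocks : Uᴴ * X * U =
        Matrix.fromBlocks ((μ : ℂ) • 1 - T₁ - (κ : ℂ) • 1) ((κ : ℂ) • 1)
          ((κ : ℂ) • 1) ((μ : ℂ) • 1 - T₂ - (κ : ℂ) • 1) := by
      have hsm : Uᴴ * ((μ : ℂ) • 1) * U = (μ : ℂ) • (1 : Matrix (Fin N ⊕ Fin N) (Fin N ⊕ Fin N) ℂ) := by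
        rw [mul_smul_comm, mul_one, smul_mul_assoc, hUU]
      have hXU : Uᴴ * X * U = (μ : ℂ) • 1 - Uᴴ * M' * U := by
        rw [hX, mul_sub, sub_mul, hsm]
      rw [hXU, hM', Matrix.fromBlocks_map, hmap₁, hmap₂, hmapκ, hUH, hU,
        Matrix.fromBlocks_multiply, Matrix.fromBlocks_multiply]
      have h1 : (1 : Matrix (Fin N ⊕ Fin N) (Fin N ⊕ Fin N) ℂ)
          = Matrix.fromBlocks 1 0 0 1 := (Matrix.fromBlocks_one).symm
      rw [h1, Matrix.fromBlocks_smul, fromBlocks_sub']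
      have hT1' : Qᴴ * (L₁' * Q) = T₁ := by rw [hT₁def, Matrix.mul_assoc]
      have hT2' : Qᴴ * (L₂' * Q) = T₂ := by rw [hT₂def, Matrix.mul_assoc]
      congr 1 <;> first
        | (simp [mul_add, add_mul, mul_smul_comm, smul_mul_assoc, hQ1, hT1', hT2',
            mul_assoc]; try abel; try trivial)
        | rfl
    rw [hblocks, det_fromBlocks_triangular _ _ _ ?h₁ ?h₂]
    case h₁ =>
      intro a b hab
      have h1 : ((μ : ℂ) • (1 : Matrix (Fin N) (Fin N) ℂ)) a b = 0 := by
        simp [Matrix.one_apply, (ne_of_lt hab).symm]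
      have h2 : (((κ : ℂ)) • (1 : Matrix (Fin N) (Fin N) ℂ)) a b = 0 := by
        simp [Matrix.one_apply, (ne_of_lt hab).symm]
      rw [Matrix.sub_apply, Matrix.sub_apply, hT₁ a b hab] at *
      rw [h1, h2] at *
      simp
    case h₂ =>
      intro a b hab
      have h1 : ((μ : ℂ) • (1 : Matrix (Fin N) (Fin N) ℂ)) a b = 0 := by
        simp [Matrix.one_apply, (ne_of_lt hab).symm]
      have h2 : (((κ : ℂ)) • (1 : Matrix (Fin N) (Fin N) ℂ)) a b = 0 := by
        simp [Matrix.one_apply, (ne_of_lt hab).symm]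
      rw [Matrix.sub_apply, Matrix.sub_apply, hT₂ a b hab] at *
      rw [h1, h2] at *
      simp
    refine Finset.prod_eq_zero (Finset.mem_univ i) ?_
    have e₁ : ((μ : ℂ) • 1 - T₁ - (κ : ℂ) • 1) i i = (μ : ℂ) - (lam₁ i : ℂ) - (κ : ℂ) := by
      rw [Matrix.sub_apply, Matrix.sub_apply, Matrix.smul_apply, Matrix.smul_apply,
        Matrix.one_apply_eq, hlam₁ i, smul_eq_mul, smul_eq_mul]
      ring
    have e₂ : ((μ : ℂ) • 1 - T₂ - (κ : ℂ) • 1) i i = (μ : ℂ) - (lam₂ i : ℂ) - (κ : ℂ) := by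
      rw [Matrix.sub_apply, Matrix.sub_apply, Matrix.smul_apply, Matrix.smul_apply,
        Matrix.one_apply_eq, hlam₂ i, smul_eq_mul, smul_eq_mul]
      ring
    rw [e₁, e₂]
    have := hμ
    push_cast
    exact_mod_cast (by push_cast; exact_mod_cast congrArg (Complex.ofReal) hμ :
      ((μ - lam₁ i - κ) * (μ - lam₂ i - κ) - κ * κ : ℂ) = 0)
  have hs : Real.sqrt ((lam₁ i - lam₂ i) ^ 2 + 4 * κ ^ 2) ^ 2
      = (lam₁ i - lam₂ i) ^ 2 + 4 * κ ^ 2 :=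
    Real.sq_sqrt (by positivity)
  constructor
  · apply key
    nlinarith [hs]
  · apply key
    nlinarith [hs]
end

section
/- Let S ∈ ℂ^{M×M} have zero diagonal and let L_S = diag(Σ_ℓ κ_{1ℓ}, …, Σ_ℓ κ_{Mℓ}) − S be its Laplacian, where κ_{kℓ} are the entries of S. For any Laplacian matrices L_1,…,L_M ∈ ℂ^{N×N} (each with all row sums zero), every eigenvalue ρ of L_S is an eigenvalue of the supra-Laplacian L_supra = diag(L_1,…,L_M) + L_S ⊗ I_N; specifically, if v ∈ ℂ^M satisfies L_S v = ρ v, then v ⊗ (1,…,1)^T is an eigenvector of L_supra with eigenvalue ρ. -/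
open Matrix

/-- Every eigenvalue ρ of the interlayer Laplacian L_S is an eigenvalue of the
supra-Laplacian, with eigenvector v ⊗ (1,…,1). -/
theorem interlayer_laplacian_eigenvalues_lift (M N : ℕ) (hN : 0 < N)
    (S : Matrix (Fin M) (Fin M) ℂ) (hdiag : ∀ k, S k k = 0)
    (L : Fin M → Matrix (Fin N) (Fin N) ℂ)
    (hL : ∀ ℓ, L ℓ *ᵥ (fun _ => (1 : ℂ)) = 0)
    (ρ : ℂ) (v : Fin M → ℂ) (hv : v ≠ 0)
    (hvec : (Matrix.diagonal (fun k => ∑ ℓ, S k ℓ) - S) *ᵥ v = ρ • v) :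
    (Matrix.of fun p q : Fin M × Fin N =>
        (if p.1 = q.1 then L p.1 p.2 q.2 else 0) +
          (Matrix.diagonal (fun k => ∑ ℓ, S k ℓ) - S) p.1 q.1 *
            (if p.2 = q.2 then 1 else 0)) *ᵥ (fun p => v p.1) =
      ρ • (fun p : Fin M × Fin N => v p.1) ∧
    (fun p : Fin M × Fin N => v p.1) ≠ 0 := by
  constructor
  · funext p
    obtain ⟨k, n⟩ := p
    have hrow : ∑ j, L k n j = 0 := by
      have := congrFun (hL k) n
      simpa [Matrix.mulVec, dotProduct] using this
    have hvk : ∑ j, (Matrix.diagonal (fun k => ∑ ℓ, S k ℓ) - S) k j * v j = ρ * v k := by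
      have := congrFun hvec k
      simpa [Matrix.mulVec, dotProduct] using this
    simp only [Matrix.mulVec, dotProduct]
    rw [Fintype.sum_prod_type]
    simp only [Matrix.of_apply, add_mul]
    simp only [Finset.sum_add_distrib]
    have h1 : ∑ x : Fin M, ∑ j : Fin N,
        (if k = x then L k n j else 0) * v x = 0 := by
      rw [Finset.sum_eq_single k]
      · simp [← Finset.sum_mul, hrow]
      · intro b _ hb
        simp [Ne.symm hb]
      · simp
    have h2 : ∑ x : Fin M, ∑ j : Fin N,
        (Matrix.diagonal (fun k => ∑ ℓ, S k ℓ) - S) k x * (if n = j then 1 else 0) * v x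
        = ρ * v k := by
      rw [← hvk]
      apply Finset.sum_congr rfl
      intro x _
      simp [Finset.mul_sum, mul_comm, mul_assoc]
    rw [h1, h2]
    simp [Pi.smul_apply, smul_eq_mul]
  · intro h
    obtain ⟨k, hk⟩ := Function.ne_iff.mp hv
    exact hk (congrFun h (k, ⟨0, hN⟩))
end
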